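/- Let A ⊆ ℕ^m. There exists a quasi-polynomial of degree at most m − 1 that equals Card V_A^{(w)}(r) for all sufficiently large r if and only if A is nonempty; moreover, if A = ∅ then Card V_A^{(w)}(r) equals, for every r ∈ ℕ, the number of x ∈ ℕ^m with ord_w x ≤ r, which is a quasi-polynomial of degree exactly m. -/

import Mathlib

open Polynomial Finset

/-- The weighted order of a point `a ∈ ℕ^m`: `ord_w a = w₁a₁ + ⋯ + w_m a_m`. -/
def ordw {m : ℕ} (w : Fin m → ℕ) (a : Fin m → ℕ) : ℕ := ∑ i, w i * a i

/-- `V_A`: the set of `v ∈ ℕ^m` that do not exceed (w.r.t. the product order)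
any element of `A`. -/
def VA {m : ℕ} (A : Set (Fin m → ℕ)) : Set (Fin m → ℕ) := {v | ∀ a ∈ A, ¬ a ≤ v}

/-- `V_A^{(w)}(r)`: elements of `V_A` of weighted order at most `r`. -/
def VAw {m : ℕ} (w : Fin m → ℕ) (A : Set (Fin m → ℕ)) (r : ℕ) : Set (Fin m → ℕ) :=
  {v ∈ VA A | ordw w v ≤ r}

namespace QPX

/-- Everywhere quasi-polynomial with natDegree bound `d`. -/
def QPn (d : ℕ) (f : ℕ → ℚ) : Prop :=
  ∃ q : ℕ, 0 < q ∧ ∃ g : ℕ → Polynomial ℚ, (∀ i, (g i).natDegree ≤ d) ∧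
    ∀ r : ℕ, f r = (g (r % q)).eval (r : ℚ)

/-- Eventual quasi-polynomial with strict degree bound `n` (degree < n, in `WithBot ℕ`). -/
def EQPlt (n : ℕ) (f : ℕ → ℚ) : Prop :=
  ∃ q : ℕ, 0 < q ∧ ∃ g : ℕ → Polynomial ℚ, (∀ i, (g i).degree < (n : WithBot ℕ)) ∧
    ∃ N : ℕ, ∀ r : ℕ, N ≤ r → f r = (g (r % q)).eval (r : ℚ)

theorem EQPlt.mono {n n' : ℕ} {f : ℕ → ℚ} (h : EQPlt n f) (hn : n ≤ n') : EQPlt n' f := by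
  obtain ⟨q, hq, g, hg, N, hN⟩ := h
  exact ⟨q, hq, g, fun i => lt_of_lt_of_le (hg i) (by exact_mod_cast WithBot.coe_le_coe.2 hn),
    N, hN⟩

theorem EQPlt.congr {n : ℕ} {f f' : ℕ → ℚ} (h : EQPlt n f) {M : ℕ}
    (hff' : ∀ r, M ≤ r → f r = f' r) : EQPlt n f' := by
  obtain ⟨q, hq, g, hg, N, hN⟩ := h
  exact ⟨q, hq, g, hg, max N M, fun r hr => by
    rw [← hff' r (le_trans (le_max_right _ _) hr)]; exact hN r (le_trans (le_max_left _ _) hr)⟩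

theorem EQPlt.zero {n : ℕ} : EQPlt n (fun _ => (0 : ℚ)) :=
  ⟨1, one_pos, fun _ => 0, fun _ => by rw [Polynomial.degree_zero]; exact WithBot.bot_lt_coe n,
    0, fun r _ => by simp⟩

theorem mod_mod_left (r q w : ℕ) : r % (q * w) % q = r % q :=
  Nat.mod_mod_of_dvd _ ⟨w, rfl⟩

theorem mod_mod_right (r q w : ℕ) : r % (q * w) % w = r % w :=
  Nat.mod_mod_of_dvd _ ⟨q, mul_comm q w⟩

theorem EQPlt.add {n : ℕ} {f g : ℕ → ℚ} (hf : EQPlt n f) (hg : EQPlt n g) :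
    EQPlt n (fun r => f r + g r) := by
  obtain ⟨q1, hq1, g1, hg1, N1, hN1⟩ := hf
  obtain ⟨q2, hq2, g2, hg2, N2, hN2⟩ := hg
  refine ⟨q1 * q2, Nat.mul_pos hq1 hq2, fun i => g1 (i % q1) + g2 (i % q2), fun i => ?_,
    max N1 N2, fun r hr => ?_⟩
  · exact lt_of_le_of_lt (Polynomial.degree_add_le _ _) (max_lt (hg1 _) (hg2 _))
  · show f r + g r = _
    rw [hN1 r (le_trans (le_max_left _ _) hr), hN2 r (le_trans (le_max_right _ _) hr)]
    simp [mod_mod_left, mod_mod_right]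

theorem EQPlt.sum {n : ℕ} (K : ℕ) (F : ℕ → ℕ → ℚ) (h : ∀ k, k < K → EQPlt n (F k)) :
    EQPlt n (fun r => ∑ k ∈ range K, F k r) := by
  induction K with
  | zero => simpa using EQPlt.zero
  | succ K ih =>
    have := (ih (fun k hk => h k (by omega))).add (h K (by omega))
    refine this.congr (M := 0) fun r _ => ?_
    rw [Finset.sum_range_succ]

theorem sub_mod_shift {r c q : ℕ} (hq : 0 < q) (hc : c ≤ r) :
    (r - c) % q = (r % q + (q * c - c)) % q := by
  have h1 : c ≤ q * c := Nat.le_mul_of_pos_left c hq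
  have h2 : (r - c) + q * c = r + (q * c - c) := by omega
  calc (r - c) % q = ((r - c) + q * c) % q := by rw [Nat.add_mul_mod_self_left]
    _ = (r + (q * c - c)) % q := by rw [h2]
    _ = (r % q + (q * c - c)) % q := by rw [Nat.mod_add_mod]

theorem EQPlt.shift {n : ℕ} {f : ℕ → ℚ} (hf : EQPlt n f) (c : ℕ) :
    EQPlt n (fun r => f (r - c)) := by
  obtain ⟨q, hq, g, hg, N, hN⟩ := hf
  refine ⟨q, hq, fun i => (g ((i + (q * c - c)) % q)).comp (X - C (c : ℚ)), fun i => ?_,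
    N + c, fun r hr => ?_⟩
  · show ((g ((i + (q * c - c)) % q)).comp (X - C (c : ℚ))).degree < (n : WithBot ℕ)
    rcases eq_or_ne (g ((i + (q * c - c)) % q)) 0 with h | h
    · rw [h, Polynomial.zero_comp, Polynomial.degree_zero]; exact WithBot.bot_lt_coe n
    · have hcomp : (g ((i + (q * c - c)) % q)).comp (X - C (c : ℚ)) ≠ 0 := by
        intro h0
        apply h
        have := congrArg (fun p => p.comp (X + C (c : ℚ))) h0
        simpa [Polynomial.comp_assoc, Polynomial.sub_comp, Polynomial.X_comp,
          Polynomial.C_comp] using this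
      rw [Polynomial.degree_eq_natDegree hcomp, Polynomial.natDegree_comp]
      simp only [Polynomial.natDegree_X_sub_C, mul_one]
      rw [← Polynomial.degree_eq_natDegree h]
      exact hg _
  · show f (r - c) = _
    have hcr : c ≤ r := by omega
    have hNr : N ≤ r - c := by omega
    rw [hN (r - c) hNr]
    rw [Polynomial.eval_comp]
    have hcast : ((r - c : ℕ) : ℚ) = (r : ℚ) - c := by
      push_cast [Nat.cast_sub hcr]; ring
    rw [sub_mod_shift hq hcr]
    simp [hcast, Nat.mod_add_mod]

end QPX
namespace QPX
open Polynomial Finset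

theorem antidiff (Q : ℚ) (hQ : Q ≠ 0) :
    ∀ (d : ℕ) (p : Polynomial ℚ), p.natDegree ≤ d →
      ∃ P : Polynomial ℚ, P.natDegree ≤ d + 1 ∧
        ∀ x : ℚ, P.eval x = P.eval (x - Q) + p.eval x := by
  intro d
  induction d with
  | zero =>
    intro p hp
    have hp' : p = C (p.coeff 0) := Polynomial.eq_C_of_natDegree_le_zero hp
    refine ⟨C (p.coeff 0 / Q) * X, ?_, fun x => ?_⟩
    · exact (Polynomial.natDegree_C_mul_le _ _).trans (le_of_eq Polynomial.natDegree_X)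
    · rw [hp']
      simp only [Polynomial.eval_mul, Polynomial.eval_C, Polynomial.eval_X]
      field_simp
      simp only [Polynomial.coeff_C_zero]
      ring
  | succ d ih =>
    intro p hp
    set n := d + 2 with hn
    set c := p.coeff (d + 1) with hc
    have hnQ : ((n : ℚ) * Q) ≠ 0 := mul_ne_zero (by positivity) hQ
    set e := c / ((n : ℚ) * Q) with he
    set D : Polynomial ℚ := X ^ n - (X - C Q) ^ n with hD
    have hXC : (X - C Q : Polynomial ℚ) = X + C (-Q) := by rw [Polynomial.C_neg]; ring
    have hDcoeff : ∀ k, D.coeff k =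
        (if k = n then (1:ℚ) else 0) - (-Q) ^ (n - k) * (n.choose k : ℚ) := by
      intro k
      rw [hD, Polynomial.coeff_sub, Polynomial.coeff_X_pow, hXC,
        Polynomial.coeff_X_add_C_pow]
    have hDdeg : D.natDegree ≤ d + 1 := by
      rw [Polynomial.natDegree_le_iff_coeff_eq_zero]
      intro N hN
      have hcases : N = n ∨ n < N := by omega
      rw [hDcoeff]
      rcases hcases with h | h
      · subst h; simp
      · rw [if_neg (by omega), Nat.choose_eq_zero_of_lt h]
        simp
    have hDtop : D.coeff (d + 1) = (n : ℚ) * Q := by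
      rw [hDcoeff, if_neg (by omega)]
      have h1 : n - (d + 1) = 1 := by omega
      have h2 : n.choose (d + 1) = n := by
        have := Nat.choose_succ_self_right (d + 1)
        simpa [hn] using this
      rw [h1, h2]
      ring
    set p1 := p - C e * D with hp1
    have hp1deg : p1.natDegree ≤ d := by
      rw [Polynomial.natDegree_le_iff_coeff_eq_zero]
      intro N hN
      rw [hp1, Polynomial.coeff_sub, Polynomial.coeff_C_mul]
      rcases eq_or_lt_of_le (show d + 1 ≤ N by omega) with h | h
      · rw [← h, hDtop, he, ← hc]
        field_simp
        have hn0 : (n:ℚ) ≠ 0 := by rw [hn]; positivity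
        simp [div_self hn0]
      · have h1 : p.coeff N = 0 := by
          rw [Polynomial.natDegree_le_iff_coeff_eq_zero] at hp
          exact hp N h
        have h2 : D.coeff N = 0 := by
          rw [Polynomial.natDegree_le_iff_coeff_eq_zero] at hDdeg
          exact hDdeg N h
        rw [h1, h2]; ring
    obtain ⟨P1, hP1deg, hP1⟩ := ih p1 hp1deg
    refine ⟨C e * X ^ n + P1, ?_, fun x => ?_⟩
    · refine (Polynomial.natDegree_add_le _ _).trans (max_le ?_ (by omega))
      exact (Polynomial.natDegree_C_mul_le _ _).trans (le_of_eq (Polynomial.natDegree_X_pow n))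
    · have hDx : D.eval x = x ^ n - (x - Q) ^ n := by
        rw [hD]; simp
      have hpx : p.eval x = e * D.eval x + p1.eval x := by
        rw [hp1]
        simp only [Polynomial.eval_sub, Polynomial.eval_mul, Polynomial.eval_C]
        ring
      simp only [Polynomial.eval_add, Polynomial.eval_mul, Polynomial.eval_C,
        Polynomial.eval_pow, Polynomial.eval_X]
      rw [hP1 x, hpx, hDx]
      ring

/-- Core summation lemma: if `f` is everywhere quasi-polynomial of degree ≤ d (as a
`natDegree` bound), then `r ↦ ∑_{k ≤ r/w} f (r - w k)` is everywhere quasi-polynomial of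
degree ≤ d + 1. -/
theorem QPn.sum_div {d : ℕ} {f : ℕ → ℚ} (hf : QPn d f) {w : ℕ} (hw : 0 < w) :
    QPn (d + 1) (fun r => ∑ k ∈ range (r / w + 1), f (r - w * k)) := by
  obtain ⟨q, hq, g, hg, hfg⟩ := hf
  set Q := w * q with hQdef
  have hQ : 0 < Q := Nat.mul_pos hw hq
  set S : ℕ → ℚ := fun r => ∑ k ∈ range (r / w + 1), f (r - w * k) with hS
  -- head polynomial
  set h : ℕ → Polynomial ℚ := fun i =>
    ∑ t ∈ range q, (g ((i + (Q - w * t)) % q)).comp (X - C ((w * t : ℕ) : ℚ)) with hh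
  have hhdeg : ∀ i, (h i).natDegree ≤ d := by
    intro i
    refine Polynomial.natDegree_sum_le_of_forall_le _ _ fun t _ => ?_
    rcases eq_or_ne (g ((i + (Q - w * t)) % q)) 0 with h0 | h0
    · rw [h0, Polynomial.zero_comp]; simp
    · rw [Polynomial.natDegree_comp, Polynomial.natDegree_X_sub_C, mul_one]
      exact hg _
  -- recurrence
  have hrec : ∀ r : ℕ, Q ≤ r → S r = S (r - Q) + (h (r % Q)).eval (r : ℚ) := by
    intro r hr
    have hqr : q ≤ r / w := (Nat.le_div_iff_mul_le hw).2 (by rw [mul_comm q w]; exact hr)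
    have hsub : (r - Q) / w = r / w - q := by
      rw [hQdef]
      exact Nat.sub_mul_div r w q
    have hsplit : r / w + 1 = q + ((r - Q) / w + 1) := by omega
    rw [hS]
    simp only
    rw [hsplit, Finset.sum_range_add]
    have hhead : ∑ t ∈ range q, f (r - w * t) = (h (r % Q)).eval (r : ℚ) := by
      rw [hh]
      simp only [Polynomial.eval_finset_sum]
      refine Finset.sum_congr rfl fun t ht => ?_
      have htq : t < q := Finset.mem_range.1 ht
      have hwtQ : w * t ≤ Q := by
        rw [hQdef]; exact Nat.mul_le_mul_left w (by omega)
      have hwtr : w * t ≤ r := le_trans hwtQ hr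
      rw [hfg (r - w * t)]
      have hidx : (r - w * t) % q = (r % Q + (Q - w * t)) % q := by
        have hdvd : q ∣ Q := ⟨w, by rw [hQdef, mul_comm]⟩
        calc (r - w * t) % q = ((r - w * t) + Q) % q := by
              obtain ⟨u, hu⟩ := hdvd
              rw [hu, mul_comm q u, Nat.add_mul_mod_self_right]
            _ = (r + (Q - w * t)) % q := by congr 1; omega
            _ = (r % q + (Q - w * t)) % q := by rw [Nat.mod_add_mod]
            _ = (r % Q % q + (Q - w * t)) % q := by rw [Nat.mod_mod_of_dvd r hdvd]
            _ = (r % Q + (Q - w * t)) % q := by rw [Nat.mod_add_mod]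
      rw [hidx, Polynomial.eval_comp]
      simp only [Polynomial.eval_sub, Polynomial.eval_X, Polynomial.eval_C]
      congr 1
      push_cast [Nat.cast_sub hwtr]
      ring
    rw [hhead]
    have htail : ∑ k ∈ range ((r - Q) / w + 1), f (r - w * (q + k))
        = S (r - Q) := by
      rw [hS]
      simp only
      refine Finset.sum_congr rfl fun k hk => ?_
      congr 1
      rw [hQdef]
      have : w * (q + k) = w * q + w * k := by ring
      omega
    rw [htail]
    ring
  -- antiderivatives
  have hex : ∀ i : ℕ, ∃ P : Polynomial ℚ, P.natDegree ≤ d + 1 ∧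
      ∀ x : ℚ, P.eval x = P.eval (x - (Q : ℚ)) + (h i).eval x := by
    intro i
    exact antidiff (Q : ℚ) (by positivity) d (h i) (hhdeg i)
  choose H hHdeg hH using hex
  refine ⟨Q, hQ, fun i => H i + C (S i - (H i).eval (i : ℚ)), fun i => ?_, ?_⟩
  · refine (Polynomial.natDegree_add_le _ _).trans (max_le (hHdeg i) ?_)
    simp
  · intro r
    induction r using Nat.strong_induction_on with
    | _ r ih =>
      rcases lt_or_ge r Q with hrQ | hrQ
      · rw [Nat.mod_eq_of_lt hrQ]
        simp only [Polynomial.eval_add, Polynomial.eval_C]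
        ring
      · have hrQ' : r - Q < r := by omega
        have hmod : (r - Q) % Q = r % Q := by
          conv_rhs => rw [show r = (r - Q) + Q by omega]
          rw [Nat.add_mod_right]
        have hcast : ((r - Q : ℕ) : ℚ) = (r : ℚ) - Q := by
          push_cast [Nat.cast_sub hrQ]; ring
        show S r = _
        rw [hrec r hrQ, ih (r - Q) hrQ', hmod]
        simp only [Polynomial.eval_add, Polynomial.eval_C]
        rw [hcast, hH (r % Q) (r : ℚ)]
        ring

end QPX
namespace QPX
open Polynomial Finset

theorem EQPlt.of_periodic {w N : ℕ} (hw : 0 < w) (c : ℕ → ℚ) {f : ℕ → ℚ}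
    (hf : ∀ r, N ≤ r → f r = c (r % w)) : EQPlt 1 f := by
  refine ⟨w, hw, fun i => C (c i), fun i => ?_, N, fun r hr => by rw [hf r hr]; simp⟩
  refine lt_of_le_of_lt Polynomial.degree_C_le ?_
  exact_mod_cast WithBot.coe_lt_coe.2 zero_lt_one

theorem QPn.to_EQPlt {d : ℕ} {f : ℕ → ℚ} (hf : QPn d f) : EQPlt (d + 1) f := by
  obtain ⟨q, hq, g, hg, hfg⟩ := hf
  refine ⟨q, hq, g, fun i => ?_, 0, fun r _ => hfg r⟩
  have h1 : (g i).degree ≤ ((d : ℕ) : WithBot ℕ) :=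
    Polynomial.degree_le_natDegree.trans (by exact_mod_cast hg i)
  exact lt_of_le_of_lt h1 (by exact_mod_cast Nat.lt_succ_self d)

theorem sum_div_correction {w N : ℕ} (hw : 0 < w) (e : ℕ → ℚ) (he : ∀ j, N ≤ j → e j = 0)
    (r : ℕ) (hr : N ≤ r) :
    ∑ k ∈ range (r / w + 1), e (r - w * k)
      = ∑ j ∈ (range N).filter (fun j => j % w = r % w), e j := by
  have hsub : ∀ k, k ∈ range (r / w + 1) → w * k ≤ r := by
    intro k hk
    have h1 : k ≤ r / w := by have := Finset.mem_range.1 hk; omega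
    have h2 : k * w ≤ r := (Nat.le_div_iff_mul_le hw).1 h1
    rw [mul_comm]; exact h2
  rw [← Finset.sum_filter_of_ne (p := fun k => r - w * k < N)
    (fun k hk hne => by by_contra hlt; exact hne (he _ (by omega)))]
  refine Finset.sum_nbij' (i := fun k => r - w * k) (j := fun j => (r - j) / w)
    ?_ ?_ ?_ ?_ ?_
  · intro k hk
    obtain ⟨hk1, hk2⟩ := Finset.mem_filter.1 hk
    have hwk := hsub k hk1
    show r - w * k ∈ (range N).filter (fun j => j % w = r % w)
    refine Finset.mem_filter.2 ⟨Finset.mem_range.2 hk2, ?_⟩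
    conv_rhs => rw [show r = (r - w * k) + w * k by omega]
    rw [Nat.add_mul_mod_self_left]
  · intro j hj
    obtain ⟨hj1, hj2⟩ := Finset.mem_filter.1 hj
    have hjN : j < N := Finset.mem_range.1 hj1
    have hjr : j ≤ r := by omega
    have hdvd : w ∣ r - j := (Nat.modEq_iff_dvd' hjr).1 hj2
    show (r - j) / w ∈ (range (r / w + 1)).filter (fun k => r - w * k < N)
    refine Finset.mem_filter.2 ⟨Finset.mem_range.2 ?_, ?_⟩
    · have := Nat.div_le_div_right (c := w) (Nat.sub_le r j)
      omega
    · rw [Nat.mul_div_cancel' hdvd]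
      omega
  · intro k hk
    obtain ⟨hk1, _⟩ := Finset.mem_filter.1 hk
    have hwk := hsub k hk1
    have h1 : r - (r - w * k) = w * k := by omega
    show (r - (r - w * k)) / w = k
    rw [h1, Nat.mul_div_cancel_left k hw]
  · intro j hj
    obtain ⟨hj1, hj2⟩ := Finset.mem_filter.1 hj
    have hjN : j < N := Finset.mem_range.1 hj1
    have hjr : j ≤ r := by omega
    have hdvd : w ∣ r - j := (Nat.modEq_iff_dvd' hjr).1 hj2
    show r - w * ((r - j) / w) = j
    rw [Nat.mul_div_cancel' hdvd]
    omega
  · intro k _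
    rfl

theorem EQPlt.sum_div {n : ℕ} {f : ℕ → ℚ} (hf : EQPlt n f) {w : ℕ} (hw : 0 < w) :
    EQPlt (n + 1) (fun r => ∑ k ∈ range (r / w + 1), f (r - w * k)) := by
  obtain ⟨q, hq, g, hg, N, hN⟩ := hf
  set ft : ℕ → ℚ := fun r => (g (r % q)).eval (r : ℚ) with hft
  set e : ℕ → ℚ := fun j => f j - ft j with hpe
  have he : ∀ j, N ≤ j → e j = 0 := fun j hj => by
    rw [hpe]; simp only; rw [hN j hj]; ring
  have hsplit : ∀ r, N ≤ r → (∑ k ∈ range (r / w + 1), f (r - w * k))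
      = (∑ k ∈ range (r / w + 1), ft (r - w * k))
        + ∑ j ∈ (range N).filter (fun j => j % w = r % w), e j := by
    intro r hr
    rw [← sum_div_correction hw e he r hr, ← Finset.sum_add_distrib]
    refine Finset.sum_congr rfl fun k _ => ?_
    rw [hpe]; simp only; ring
  set c : ℕ → ℚ := fun i => ∑ j ∈ (range N).filter (fun j => j % w = i % w), e j with hcd
  have hcc : ∀ r, (∑ j ∈ (range N).filter (fun j => j % w = r % w), e j) = c (r % w) := by
    intro r
    rw [hcd]
    simp only [Nat.mod_mod_of_dvd r (dvd_refl w)]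
  rcases Nat.eq_zero_or_pos n with rfl | hn
  · -- all polynomials are zero, so `f` is eventually 0 and only the correction remains
    have hg0 : ∀ i, g i = 0 := by
      intro i
      have h := hg i
      rw [Nat.cast_zero] at h
      exact Polynomial.degree_eq_bot.1 (Nat.WithBot.lt_zero_iff.1 h)
    have hft0 : ∀ j, ft j = 0 := fun j => by rw [hft]; simp [hg0]
    refine ((EQPlt.of_periodic hw c (N := N) fun r hr => ?_).mono (by omega) :
      EQPlt (0 + 1) _)
    rw [hsplit r hr, ← hcc r]
    simp only [hft0]
    simp
  · have hgd : ∀ i, (g i).natDegree ≤ n - 1 := by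
      intro i
      rcases eq_or_ne (g i) 0 with h0 | h0
      · simp [h0]
      · have := hg i
        rw [Polynomial.degree_eq_natDegree h0] at this
        have h2 : (g i).natDegree < n := by exact_mod_cast this
        omega
    have hftq : QPn (n - 1) ft := ⟨q, hq, g, hgd, fun r => rfl⟩
    have hSft := hftq.sum_div hw
    rw [show n - 1 + 1 = n by omega] at hSft
    have h1 : EQPlt (n + 1) (fun r => ∑ k ∈ range (r / w + 1), ft (r - w * k)) :=
      hSft.to_EQPlt
    have h2 : EQPlt (n + 1)
        (fun r => ∑ j ∈ (range N).filter (fun j => j % w = r % w), e j) := by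
      refine (EQPlt.of_periodic hw c (fun r _ => hcc r) (N := 0)).mono (by omega)
    exact (h1.add h2).congr (M := N) fun r hr => (hsplit r hr).symm

end QPX
namespace QPX
open Polynomial Finset

noncomputable def cntF {m : ℕ} (w : Fin m → ℕ) (A : Set (Fin m → ℕ)) (r : ℕ) :
    Finset (Fin m → ℕ) :=
  @Finset.filter _ (fun v => v ∈ VA A ∧ ordw w v ≤ r) (Classical.decPred _)
    (Fintype.piFinset fun _ : Fin m => Finset.range (r + 1))

theorem mem_cntF_raw {m : ℕ} {w : Fin m → ℕ} {A : Set (Fin m → ℕ)} {r : ℕ}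
    {v : Fin m → ℕ} : v ∈ cntF w A r ↔
      v ∈ (Fintype.piFinset fun _ : Fin m => Finset.range (r + 1)) ∧
        (v ∈ VA A ∧ ordw w v ≤ r) :=
  @Finset.mem_filter _ (fun v => v ∈ VA A ∧ ordw w v ≤ r) (Classical.decPred _) _ _

theorem coord_le_ord {m : ℕ} {w v : Fin m → ℕ} (hw : ∀ i, 0 < w i) (i : Fin m) :
    v i ≤ ordw w v :=
  calc v i ≤ w i * v i := Nat.le_mul_of_pos_left _ (hw i)
    _ ≤ ordw w v := Finset.single_le_sum (f := fun j => w j * v j)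
        (fun j _ => Nat.zero_le _) (Finset.mem_univ i)

theorem mem_cntF {m : ℕ} {w : Fin m → ℕ} (hw : ∀ i, 0 < w i) {A : Set (Fin m → ℕ)}
    {r : ℕ} {v : Fin m → ℕ} : v ∈ cntF w A r ↔ v ∈ VA A ∧ ordw w v ≤ r := by
  rw [mem_cntF_raw]
  constructor
  · exact fun h => h.2
  · intro h
    refine ⟨Fintype.mem_piFinset.2 fun i => Finset.mem_range.2 ?_, h⟩
    have := coord_le_ord (v := v) hw i
    omega

theorem coe_cntF {m : ℕ} {w : Fin m → ℕ} (hw : ∀ i, 0 < w i) (A : Set (Fin m → ℕ))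
    (r : ℕ) : (cntF w A r : Set (Fin m → ℕ)) = VAw w A r := by
  ext v
  rw [Finset.mem_coe, mem_cntF hw]
  rfl

theorem ncard_VAw {m : ℕ} {w : Fin m → ℕ} (hw : ∀ i, 0 < w i) (A : Set (Fin m → ℕ))
    (r : ℕ) : (VAw w A r).ncard = (cntF w A r).card := by
  rw [← coe_cntF hw, Set.ncard_coe_finset]

theorem ordw_succ {n : ℕ} (w v : Fin (n + 1) → ℕ) :
    ordw w v = w 0 * v 0 + ordw (Fin.tail w) (Fin.tail v) := by
  rw [ordw, Fin.sum_univ_succ, ordw]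
  rfl

theorem cntF_zero_empty (w : Fin 0 → ℕ) (r : ℕ) :
    (cntF w (∅ : Set (Fin 0 → ℕ)) r).card = 1 := by
  have h : cntF w (∅ : Set (Fin 0 → ℕ)) r
      = Fintype.piFinset fun _ : Fin 0 => Finset.range (r + 1) := by
    refine Finset.ext fun v => ?_
    rw [mem_cntF_raw]
    simp [VA, ordw]
  rw [h]
  simp

theorem cntF_zero_nonempty (w : Fin 0 → ℕ) {A : Set (Fin 0 → ℕ)} (hA : A.Nonempty)
    (r : ℕ) : (cntF w A r).card = 0 := by
  rw [Finset.card_eq_zero, Finset.eq_empty_iff_forall_notMem]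
  intro v hv
  obtain ⟨a, ha⟩ := hA
  exact (mem_cntF_raw.1 hv).2.1 a ha (fun i => i.elim0)

theorem cntF_succ {n : ℕ} (w : Fin (n + 1) → ℕ) (hw : ∀ i, 0 < w i)
    (A : Set (Fin (n + 1) → ℕ)) (r : ℕ) :
    (cntF w A r).card = ∑ k ∈ range (r / w 0 + 1),
      (cntF (Fin.tail w) (Fin.tail '' {a | a ∈ A ∧ a 0 ≤ k}) (r - w 0 * k)).card := by
  classical
  have hw' : ∀ i, 0 < Fin.tail w i := fun i => hw i.succ
  have hmem : ∀ v ∈ cntF w A r, v 0 ∈ range (r / w 0 + 1) := by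
    intro v hv
    obtain ⟨hVA, hord⟩ := (mem_cntF hw).1 hv
    have h1 : w 0 * v 0 ≤ ordw w v :=
      Finset.single_le_sum (f := fun j => w j * v j) (fun j _ => Nat.zero_le _)
        (Finset.mem_univ 0)
    have h2 : v 0 ≤ r / w 0 := (Nat.le_div_iff_mul_le (hw 0)).2 (by rw [mul_comm]; omega)
    exact Finset.mem_range.2 (by omega)
  rw [Finset.card_eq_sum_card_fiberwise hmem]
  refine Finset.sum_congr rfl fun k hk => ?_
  have hwk : w 0 * k ≤ r := by
    have h1 : k ≤ r / w 0 := by have := Finset.mem_range.1 hk; omega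
    have h2 : k * w 0 ≤ r := (Nat.le_div_iff_mul_le (hw 0)).1 h1
    rw [mul_comm]; exact h2
  refine Finset.card_nbij' (i := fun v => Fin.tail v) (j := fun t => Fin.cons k t)
    ?_ ?_ ?_ ?_
  · intro v hv
    beta_reduce
    obtain ⟨hv1, hv0⟩ := Finset.mem_filter.1 hv
    obtain ⟨hVA, hord⟩ := (mem_cntF hw).1 hv1
    refine (mem_cntF hw').2 ⟨?_, ?_⟩
    · intro b hb hble
      obtain ⟨a, ⟨haA, ha0⟩, rfl⟩ := hb
      refine hVA a haA fun i => ?_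
      refine Fin.cases ?_ (fun j => ?_) i
      · rw [hv0]; exact ha0
      · exact hble j
    · have h3 := ordw_succ w v
      rw [hv0] at h3
      omega
  · intro t ht
    beta_reduce
    obtain ⟨hVA, hord⟩ := (mem_cntF hw').1 ht
    have hconsord : ordw w (Fin.cons k t) = w 0 * k + ordw (Fin.tail w) t := by
      rw [ordw_succ w (Fin.cons k t), Fin.cons_zero, Fin.tail_cons]
    refine Finset.mem_filter.2 ⟨(mem_cntF hw).2 ⟨?_, ?_⟩, ?_⟩
    · intro a haA hle
      have ha0 : a 0 ≤ k := by
        have := hle 0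
        rwa [Fin.cons_zero] at this
      refine hVA (Fin.tail a) ⟨a, ⟨haA, ha0⟩, rfl⟩ fun j => ?_
      have := hle j.succ
      rwa [Fin.cons_succ] at this
    · omega
    · exact Fin.cons_zero _ _
  · intro v hv
    obtain ⟨_, hv0⟩ := Finset.mem_filter.1 hv
    beta_reduce
    rw [← hv0]
    exact Fin.cons_self_tail v
  · intro t _
    beta_reduce
    exact Fin.tail_cons (α := fun _ : Fin (n + 1) => ℕ) k t

end QPX
namespace QPX
open Polynomial Finset

theorem main_induction : ∀ m : ℕ, ∀ w : Fin m → ℕ, (∀ i, 0 < w i) →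
    ∀ A : Set (Fin m → ℕ), A.Finite →
      (A.Nonempty → EQPlt m (fun r => ((cntF w A r).card : ℚ))) ∧
      (A = ∅ → QPn m (fun r => ((cntF w A r).card : ℚ))) := by
  intro m
  induction m with
  | zero =>
    intro w hw A hA
    constructor
    · intro hne
      refine EQPlt.zero.congr (M := 0) fun r _ => ?_
      rw [cntF_zero_nonempty w hne r]
      simp
    · intro hAe
      subst hAe
      refine ⟨1, one_pos, fun _ => Polynomial.C 1, fun i => by simp, fun r => ?_⟩
      beta_reduce
      rw [cntF_zero_empty]
      simp
  | succ n ih =>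
    intro w hw A hA
    have hw' : ∀ i, 0 < Fin.tail w i := fun i => hw i.succ
    have hw0 := hw 0
    constructor
    · intro hne
      obtain ⟨K, hK⟩ : ∃ K : ℕ, ∀ a ∈ A, a 0 ≤ K := by
        obtain ⟨K, hK⟩ := (hA.image (fun a => a 0)).bddAbove
        exact ⟨K, fun a ha => hK (Set.mem_image_of_mem _ ha)⟩
      set Ak : ℕ → Set (Fin n → ℕ) := fun k => Fin.tail '' {a | a ∈ A ∧ a 0 ≤ k} with hAkdef
      have hAkfin : ∀ k, (Ak k).Finite := fun k =>
        (hA.subset (fun a ha => ha.1)).image _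
      set B : Set (Fin n → ℕ) := Fin.tail '' A with hBdef
      have hAkK : ∀ k, K ≤ k → Ak k = B := by
        intro k hk
        have hset : {a | a ∈ A ∧ a 0 ≤ k} = A :=
          Set.ext fun a => ⟨fun h => h.1, fun h => ⟨h, le_trans (hK a h) hk⟩⟩
        rw [hAkdef, hBdef]
        simp only
        rw [hset]
      have hBfin : B.Finite := hA.image _
      have hBne : B.Nonempty := hne.image _
      have hB := (ih (Fin.tail w) hw' B hBfin).1 hBne
      have hsec : ∀ k, EQPlt (n + 1) (fun s => ((cntF (Fin.tail w) (Ak k) s).card : ℚ)) := by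
        intro k
        rcases Set.eq_empty_or_nonempty (Ak k) with he | hne'
        · exact ((ih (Fin.tail w) hw' (Ak k) (hAkfin k)).2 he).to_EQPlt
        · exact ((ih (Fin.tail w) hw' (Ak k) (hAkfin k)).1 hne').mono (by omega)
      have hTail : EQPlt (n + 1) (fun s => ∑ k ∈ range (s / w 0 + 1),
          ((cntF (Fin.tail w) B (s - w 0 * k)).card : ℚ)) := hB.sum_div hw0
      have hsplit : ∀ r, w 0 * K ≤ r →
          ((cntF w A r).card : ℚ)
            = (∑ k ∈ range K, ((cntF (Fin.tail w) (Ak k) (r - w 0 * k)).card : ℚ))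
              + ∑ k ∈ range ((r - w 0 * K) / w 0 + 1),
                  ((cntF (Fin.tail w) B ((r - w 0 * K) - w 0 * k)).card : ℚ) := by
        intro r hr
        have hKdiv : K ≤ r / w 0 := (Nat.le_div_iff_mul_le hw0).2 (by rw [mul_comm]; omega)
        have hsubdiv : (r - w 0 * K) / w 0 = r / w 0 - K := Nat.sub_mul_div r (w 0) K
        rw [cntF_succ w hw A r]
        rw [show r / w 0 + 1 = K + ((r - w 0 * K) / w 0 + 1) by omega, Finset.sum_range_add]
        push_cast
        congr 1
        refine Finset.sum_congr rfl fun k _ => ?_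
        have hmul : w 0 * (K + k) = w 0 * K + w 0 * k := by ring
        have hAkB : Ak (K + k) = B := hAkK _ (by omega)
        rw [hAkdef] at hAkB
        simp only at hAkB
        rw [hAkB, show r - w 0 * (K + k) = (r - w 0 * K) - w 0 * k by omega]
      have h1 : EQPlt (n + 1) (fun r => ∑ k ∈ range K,
          ((cntF (Fin.tail w) (Ak k) (r - w 0 * k)).card : ℚ)) :=
        EQPlt.sum K _ (fun k _ => (hsec k).shift (w 0 * k))
      have h2 : EQPlt (n + 1) (fun r => ∑ k ∈ range ((r - w 0 * K) / w 0 + 1),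
          ((cntF (Fin.tail w) B ((r - w 0 * K) - w 0 * k)).card : ℚ)) :=
        hTail.shift (w 0 * K)
      exact (h1.add h2).congr (M := w 0 * K) fun r hr => (hsplit r hr).symm
    · intro hAe
      subst hAe
      have hB := (ih (Fin.tail w) hw' ∅ Set.finite_empty).2 rfl
      obtain ⟨q, hq, g, hg, hfg⟩ := hB.sum_div hw0
      refine ⟨q, hq, g, hg, fun r => ?_⟩
      beta_reduce
      have hfg' := hfg r
      beta_reduce at hfg'
      rw [← hfg', cntF_succ w hw ∅ r]
      push_cast
      refine Finset.sum_congr rfl fun k _ => ?_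
      congr 2
      ext a
      simp

end QPX
namespace QPX
open Polynomial Finset

theorem finite_ord_le {m : ℕ} (w : Fin m → ℕ) (hw : ∀ i, 0 < w i) (r : ℕ) :
    {x : Fin m → ℕ | ordw w x ≤ r}.Finite := by
  have hsub : {x : Fin m → ℕ | ordw w x ≤ r}
      ⊆ Set.pi Set.univ (fun _ : Fin m => Set.Iic r) := by
    intro x hx i _
    exact Set.mem_Iic.2 (le_trans (coord_le_ord hw i) hx)
  exact Set.Finite.subset (Set.Finite.pi fun _ => Set.finite_Iic r) hsub

theorem poly_bound {d : ℕ} (p : Polynomial ℚ) (hd : p.natDegree ≤ d) (x : ℚ) (hx : 1 ≤ x) :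
    |p.eval x| ≤ (∑ j ∈ range (d + 1), |p.coeff j|) * x ^ d := by
  rw [Polynomial.eval_eq_sum_range' (lt_of_le_of_lt hd (Nat.lt_succ_self d)) x]
  refine le_trans (Finset.abs_sum_le_sum_abs _ _) ?_
  rw [Finset.sum_mul]
  refine Finset.sum_le_sum fun j hj => ?_
  rw [abs_mul]
  have hx0 : (0:ℚ) ≤ x := by linarith
  rw [abs_of_nonneg (pow_nonneg hx0 j)]
  have h1 : x ^ j ≤ x ^ d := pow_le_pow_right₀ hx (by have := Finset.mem_range.1 hj; omega)
  exact mul_le_mul_of_nonneg_left h1 (abs_nonneg _)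

theorem growth {m : ℕ} (hm : 0 < m) (w : Fin m → ℕ) (hw : ∀ i, 0 < w i)
    {q N : ℕ} (hq : 0 < q) (g : ℕ → Polynomial ℚ) (hdeg : ∀ i, (g i).natDegree ≤ m - 1) :
    ¬ (∀ r : ℕ, N ≤ r → ((Set.ncard {x : Fin m → ℕ | ordw w x ≤ r} : ℚ))
        = (g (r % q)).eval (r : ℚ)) := by
  intro hcl
  set B : ℕ := ∑ i, w i with hBdef
  have hB : 0 < B := by
    rw [hBdef]
    exact Finset.sum_pos (fun i _ => hw i) ⟨⟨0, hm⟩, Finset.mem_univ _⟩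
  set C : ℚ := 1 + ∑ i ∈ range q, ∑ j ∈ range m, |(g i).coeff j| with hCdef
  have hsum0 : ∀ i : ℕ, (0:ℚ) ≤ ∑ j ∈ range m, |(g i).coeff j| :=
    fun i => Finset.sum_nonneg fun j _ => abs_nonneg _
  have hC1 : 1 ≤ C := by
    rw [hCdef]
    have h0 : (0:ℚ) ≤ ∑ i ∈ range q, ∑ j ∈ range m, |(g i).coeff j| :=
      Finset.sum_nonneg fun i _ => hsum0 i
    linarith
  have hCb : ∀ i : ℕ, i < q → ∑ j ∈ range m, |(g i).coeff j| ≤ C := by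
    intro i hi
    rw [hCdef]
    have h1 : ∑ j ∈ range m, |(g i).coeff j|
        ≤ ∑ i' ∈ range q, ∑ j ∈ range m, |(g i').coeff j| :=
      Finset.single_le_sum (fun i' _ => hsum0 i') (Finset.mem_range.2 hi)
    linarith
  set r : ℕ := max N (max 1 (Nat.ceil (C * (B:ℚ) ^ m) + 1)) with hrdef
  have hrN : N ≤ r := le_max_left _ _
  have hr1 : 1 ≤ r := le_trans (le_max_left _ _) (le_max_right _ _)
  have hrC : C * (B:ℚ) ^ m < (r : ℚ) := by
    have h1 : Nat.ceil (C * (B:ℚ) ^ m) + 1 ≤ r :=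
      le_trans (le_max_right _ _) (le_max_right _ _)
    have h2 : C * (B:ℚ) ^ m ≤ (Nat.ceil (C * (B:ℚ) ^ m) : ℚ) := Nat.le_ceil _
    have h3 : ((Nat.ceil (C * (B:ℚ) ^ m) : ℕ) : ℚ) < (r : ℚ) := by exact_mod_cast h1
    linarith
  set k : ℕ := r / B with hkdef
  -- lower bound for the count
  have hbox : (((k + 1) ^ m : ℕ) : ℚ)
      ≤ (Set.ncard {x : Fin m → ℕ | ordw w x ≤ r} : ℚ) := by
    have hsub : ((Fintype.piFinset fun _ : Fin m => Finset.range (k + 1)) :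
        Set (Fin m → ℕ)) ⊆ {x : Fin m → ℕ | ordw w x ≤ r} := by
      intro x hx
      rw [Finset.mem_coe, Fintype.mem_piFinset] at hx
      have h1 : ordw w x ≤ ∑ i, w i * k := by
        refine Finset.sum_le_sum fun i _ => ?_
        exact Nat.mul_le_mul_left _ (by have := hx i; rw [Finset.mem_range] at this; omega)
      have h2 : ∑ i, w i * k = B * k := by
        rw [hBdef, Finset.sum_mul]
      have h3 : B * k ≤ r := by
        rw [hkdef, mul_comm]
        exact Nat.div_mul_le_self r B
      show ordw w x ≤ r
      omega
    have hcard : ((Fintype.piFinset fun _ : Fin m => Finset.range (k + 1)) :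
        Finset (Fin m → ℕ)).card = (k + 1) ^ m := by
      rw [Fintype.card_piFinset]
      simp
    have := Set.ncard_le_ncard hsub (finite_ord_le w hw r)
    rw [Set.ncard_coe_finset, hcard] at this
    exact_mod_cast this
  -- upper bound from the polynomial
  have hub : (Set.ncard {x : Fin m → ℕ | ordw w x ≤ r} : ℚ) ≤ C * (r:ℚ) ^ (m - 1) := by
    rw [hcl r hrN]
    have hx1 : (1:ℚ) ≤ (r:ℚ) := by exact_mod_cast hr1
    have hple := poly_bound _ (hdeg (r % q)) ((r : ℚ)) hx1
    rw [show m - 1 + 1 = m by omega] at hple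
    refine le_trans (le_abs_self _) (le_trans hple ?_)
    exact mul_le_mul_of_nonneg_right (hCb _ (Nat.mod_lt r hq)) (pow_nonneg (by linarith) _)
  -- comparison
  have hBQ : (0:ℚ) < (B:ℚ) := by exact_mod_cast hB
  have hrQ : (0:ℚ) < (r:ℚ) := by exact_mod_cast hr1
  have hk1 : ((r:ℚ) / B) ≤ ((k + 1 : ℕ) : ℚ) := by
    have h1 : r < B * (k + 1) := by
      have h2 := Nat.div_add_mod r B
      have h3 := Nat.mod_lt r hB
      have h4 : B * (k + 1) = B * (r / B) + B := by rw [hkdef]; ring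
      omega
    have h2 : (r:ℚ) < (B:ℚ) * ((k + 1 : ℕ) : ℚ) := by exact_mod_cast h1
    rw [div_le_iff₀ hBQ]
    linarith [mul_comm (B:ℚ) ((k + 1 : ℕ) : ℚ)]
  have hmono : ((r:ℚ) / B) ^ m ≤ (((k + 1 : ℕ) : ℚ)) ^ m :=
    pow_le_pow_left₀ (by positivity) hk1 m
  have hpow : C * (r:ℚ) ^ (m - 1) < ((r:ℚ) / B) ^ m := by
    rw [div_pow]
    have hrm : (r:ℚ) ^ m = (r:ℚ) ^ (m - 1) * r := by
      rw [← pow_succ]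
      congr 1
      omega
    rw [hrm, mul_div_assoc]
    have hpos : (0:ℚ) < (r:ℚ) ^ (m - 1) := pow_pos hrQ _
    have hfrac : C < (r:ℚ) / (B:ℚ) ^ m := by
      rw [lt_div_iff₀ (by positivity)]
      linarith [mul_comm C ((B:ℚ) ^ m)]
    calc C * (r:ℚ) ^ (m - 1) = (r:ℚ) ^ (m - 1) * C := by ring
      _ < (r:ℚ) ^ (m - 1) * ((r:ℚ) / (B:ℚ) ^ m) := by
          exact mul_lt_mul_of_pos_left hfrac hpos
  have hcast : (((k + 1) ^ m : ℕ) : ℚ) = (((k + 1 : ℕ) : ℚ)) ^ m := by push_cast; ring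
  rw [hcast] at hbox
  have hfinal : C * (r:ℚ) ^ (m - 1) < C * (r:ℚ) ^ (m - 1) :=
    lt_of_lt_of_le hpow (le_trans hmono (le_trans hbox hub))
  exact lt_irrefl _ hfinal

theorem exists_finite_min {m : ℕ} (A : Set (Fin m → ℕ)) (hA : A.Nonempty) :
    ∃ A' : Set (Fin m → ℕ), A' ⊆ A ∧ A'.Finite ∧ A'.Nonempty ∧ VA A' = VA A := by
  classical
  set A' : Set (Fin m → ℕ) := {a | a ∈ A ∧ ∀ b ∈ A, b ≤ a → a ≤ b} with hA'
  have hsubA : A' ⊆ A := fun a ha => ha.1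
  have key : ∀ n : ℕ, ∀ a ∈ A, (∑ i, a i) < n → ∃ a' ∈ A', a' ≤ a := by
    intro n
    induction n with
    | zero => intro a _ h; omega
    | succ n ih =>
      intro a ha hn
      by_cases hcase : ∀ b ∈ A, b ≤ a → a ≤ b
      · exact ⟨a, ⟨ha, hcase⟩, le_refl a⟩
      · push_neg at hcase
        obtain ⟨b, hbA, hba, hnab⟩ := hcase
        have hlt : (∑ i, b i) < ∑ i, a i := by
          obtain ⟨i, hi⟩ : ∃ i, b i < a i := by
            by_contra hno
            push_neg at hno
            exact hnab fun i => hno i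
          exact Finset.sum_lt_sum (fun j _ => hba j) ⟨i, Finset.mem_univ i, hi⟩
        obtain ⟨a', ha', hle⟩ := ih b hbA (by omega)
        exact ⟨a', ha', le_trans hle hba⟩
  have hmin : ∀ a ∈ A, ∃ a' ∈ A', a' ≤ a := fun a ha =>
    key ((∑ i, a i) + 1) a ha (by omega)
  have hanti : IsAntichain (· ≤ ·) A' := by
    intro x hx y hy hxy hle
    exact hxy (le_antisymm hle (hy.2 x hx.1 hle))
  have hpwo : A'.IsPWO :=
    Set.isPWO_of_wellQuasiOrderedLE A'
  have hfin : A'.Finite := hanti.finite_of_partiallyWellOrderedOn hpwo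
  obtain ⟨a, ha⟩ := hA
  obtain ⟨a', ha', _⟩ := hmin a ha
  refine ⟨A', hsubA, hfin, ⟨a', ha'⟩, ?_⟩
  ext v
  constructor
  · intro hv a0 ha0 hle
    obtain ⟨a1, ha1, hle1⟩ := hmin a0 ha0
    exact hv a1 ha1 (le_trans hle1 hle)
  · intro hv a0 ha0 hle
    exact hv a0 (hsubA ha0) hle

end QPX
open Polynomial Finset QPX in
theorem dimension_quasipolynomial_degree_lt_iff_nonempty
    (m : ℕ) (hm : 0 < m) (w : Fin m → ℕ) (hw : ∀ i, 0 < w i)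
    (A : Set (Fin m → ℕ)) :
    ((∃ (q : ℕ) (hq : 0 < q) (g : Fin q → Polynomial ℚ),
        (∀ i : Fin q, (g i).natDegree ≤ m - 1) ∧
        ∃ N : ℕ, ∀ r : ℕ, N ≤ r →
          (Set.ncard (VAw w A r) : ℚ) = (g ⟨r % q, Nat.mod_lt r hq⟩).eval (r : ℚ))
      ↔ A.Nonempty) ∧
    (A = ∅ →
      (∀ r : ℕ, Set.ncard (VAw w A r) = Set.ncard {x : Fin m → ℕ | ordw w x ≤ r}) ∧
      ∃ (q : ℕ) (hq : 0 < q) (g : Fin q → Polynomial ℚ),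
        (∀ i : Fin q, (g i).natDegree ≤ m) ∧ (∃ i : Fin q, (g i).natDegree = m) ∧
        ∀ r : ℕ,
          (Set.ncard {x : Fin m → ℕ | ordw w x ≤ r} : ℚ)
            = (g ⟨r % q, Nat.mod_lt r hq⟩).eval (r : ℚ)) := by
  have hset : ∀ r, VAw w (∅ : Set (Fin m → ℕ)) r = {x : Fin m → ℕ | ordw w x ≤ r} := by
    intro r
    ext v
    simp [VAw, VA]
  constructor
  · constructor
    · -- existence of a degree ≤ m-1 quasi-polynomial forces A ≠ ∅
      rintro ⟨q, hq, g, hdeg, N, hN⟩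
      by_contra hne
      have hAe : A = ∅ := Set.not_nonempty_iff_eq_empty.1 hne
      subst hAe
      set G : ℕ → Polynomial ℚ := fun i => if h : i < q then g ⟨i, h⟩ else 0 with hG
      have hGdeg : ∀ i, (G i).natDegree ≤ m - 1 := by
        intro i
        rw [hG]
        dsimp only
        split
        · exact hdeg _
        · simp
      refine growth hm w hw (q := q) (N := N) hq G hGdeg (fun r hr => ?_)
      have h1 := hN r hr
      rw [hset r] at h1
      rw [h1, hG]
      dsimp only
      rw [dif_pos (Nat.mod_lt r hq)]
    · -- A nonempty: reduce to a finite set of minimal elements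
      intro hne
      obtain ⟨A', hsub, hfin, hne', hVAeq⟩ := exists_finite_min A hne
      have hVAw : ∀ r, VAw w A r = VAw w A' r := by
        intro r
        rw [VAw, VAw, hVAeq]
      obtain ⟨q, hq, g, hdeg, N, hN⟩ := (main_induction m w hw A' hfin).1 hne'
      refine ⟨q, hq, fun i => g i.val, fun i => ?_, N, fun r hr => ?_⟩
      · show (g i.val).natDegree ≤ m - 1
        have hd := hdeg i.val
        rcases eq_or_ne (g i.val) 0 with h0 | h0
        · rw [h0]
          simp
        · rw [Polynomial.degree_eq_natDegree h0] at hd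
          have : (g i.val).natDegree < m := by exact_mod_cast hd
          omega
      · rw [hVAw r, ncard_VAw hw A' r]
        exact hN r hr
  · intro hAe
    subst hAe
    refine ⟨fun r => by rw [hset r], ?_⟩
    obtain ⟨q, hq, g, hdeg, hfg⟩ := (main_induction m w hw ∅ Set.finite_empty).2 rfl
    have hcnt : ∀ r : ℕ, (Set.ncard {x : Fin m → ℕ | ordw w x ≤ r} : ℚ)
        = (g (r % q)).eval (r : ℚ) := by
      intro r
      rw [← hset r, ncard_VAw hw ∅ r]
      exact hfg r
    refine ⟨q, hq, fun i => g i.val, fun i => hdeg i.val, ?_, fun r => hcnt r⟩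
    by_contra hno
    push_neg at hno
    refine growth hm w hw (q := q) (N := 0) hq (fun i => g (i % q)) (fun i => ?_)
      (fun r _ => ?_)
    · show (g (i % q)).natDegree ≤ m - 1
      have h1 : (g (i % q)).natDegree ≤ m := hdeg (i % q)
      have h2 : (g (i % q)).natDegree ≠ m := hno ⟨i % q, Nat.mod_lt i hq⟩
      omega
    · beta_reduce
      rw [Nat.mod_mod_of_dvd r (dvd_refl q)]
      exact hcnt r
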